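/- Let Γ be a simplicial complex and k a field of characteristic 2. Then the reduced simplicial homology H̃_d(Γ; k) is non-zero if and only if Γ contains a d-dimensional cycle the sum of whose d-faces is not a d-boundary in Γ. -/

import Mathlib

open Finset

namespace ChordedPaper

variable {V : Type*} [DecidableEq V] [Fintype V]

/-- A simplicial complex: a set of finsets (faces) closed under taking subsets.
(The vertices of the complex are the vertices of its faces, so all singletons of
vertices are automatically faces.) -/
def IsComplex (K : Set (Finset V)) : Prop :=
  ∀ F ∈ K, ∀ G ⊆ F, G ∈ K

/-- The vertex set `V(K)` of a complex. -/
def verts (K : Set (Finset V)) : Set V :=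
  {v | ∃ F ∈ K, v ∈ F}

/-- The `d`-dimensional faces (cardinality `d+1`) of `K`. -/
def dfaces (K : Set (Finset V)) (d : ℕ) : Set (Finset V) :=
  {F | F ∈ K ∧ F.card = d + 1}

/-- `K` is pure `d`-dimensional: every face is contained in a `d`-face. -/
def IsPureD (K : Set (Finset V)) (d : ℕ) : Prop :=
  ∀ F ∈ K, ∃ G ∈ dfaces K d, F ⊆ G

/-- The complex generated by a set of facets. -/
def gen (S : Set (Finset V)) : Set (Finset V) :=
  {G | ∃ F ∈ S, G ⊆ F}

/-- The pure `d`-skeleton `K^{[d]}`: the complex whose facets are the `d`-faces of `K`. -/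
def skel (K : Set (Finset V)) (d : ℕ) : Set (Finset V) :=
  gen (dfaces K d)

/-- The induced subcomplex `K_W` on a set `W` of vertices. -/
def induced (K : Set (Finset V)) (W : Set V) : Set (Finset V) :=
  {F | F ∈ K ∧ ↑F ⊆ W}

/-- Two `d`-faces of `S` are adjacent in a `d`-path if they share `d` vertices. -/
def adj (S : Set (Finset V)) (d : ℕ) (F G : Finset V) : Prop :=
  F ∈ S ∧ G ∈ S ∧ (F ∩ G).card = d

/-- `d`-path-connectedness: any two `d`-faces are joined by a `d`-path. -/
def PathConn (K : Set (Finset V)) (d : ℕ) : Prop :=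
  ∀ F ∈ dfaces K d, ∀ G ∈ dfaces K d, Relation.ReflTransGen (adj (dfaces K d) d) F G

/-- A `d`-dimensional cycle: a pure `d`-dimensional, `d`-path-connected complex in which
every `(d-1)`-face lies in an even number of `d`-faces. -/
def IsCycle (Ω : Set (Finset V)) (d : ℕ) : Prop :=
  IsComplex Ω ∧ IsPureD Ω d ∧ (dfaces Ω d).Nonempty ∧ PathConn Ω d ∧
    ∀ f ∈ Ω, Finset.card f = d → Even {F | F ∈ dfaces Ω d ∧ f ⊆ F}.ncard

/-- A `d`-dimensional cycle in the complex `Γ`. -/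
def CycleIn (Γ Ω : Set (Finset V)) (d : ℕ) : Prop :=
  Ω ⊆ Γ ∧ IsCycle Ω d

/-- Face-minimality: no strict subset of the `d`-faces of `Ω` forms a `d`-dimensional cycle. -/
def FaceMinimal (Ω : Set (Finset V)) (d : ℕ) : Prop :=
  ∀ S : Set (Finset V), S ⊂ dfaces Ω d → ¬ IsCycle (gen S) d

/-- Vertex-minimality of a cycle `Ω` in `Γ`: no `d`-dimensional cycle in `Γ` lies on a
strict subset of the vertices of `Ω`. -/
def VertexMinimal (Γ Ω : Set (Finset V)) (d : ℕ) : Prop :=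
  ∀ Ω', CycleIn Γ Ω' d → ¬ (verts Ω' ⊂ verts Ω)

/-- `d`-completeness: every `(d+1)`-subset of the vertex set is a face. -/
def DComplete (K : Set (Finset V)) (d : ℕ) : Prop :=
  ∀ S : Finset V, ↑S ⊆ verts K → S.card = d + 1 → S ∈ K

/-- A chord set `C` of the `d`-dimensional cycle `Ω` in `Γ`. -/
def ChordSet (Γ Ω : Set (Finset V)) (d : ℕ) (C : Set (Finset V)) : Prop :=
  C ⊆ dfaces Γ d ∧ (∀ F ∈ C, F ∉ Ω) ∧ (∀ F ∈ C, ↑F ⊆ verts Ω) ∧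
    ∃ (n : ℕ) (Ωi : Fin n → Set (Finset V)), 2 ≤ n ∧ (∀ i, IsCycle (Ωi i) d) ∧
      (⋃ i, dfaces (Ωi i) d) = dfaces Ω d ∪ C ∧
      (∀ F ∈ C, Even {i | F ∈ dfaces (Ωi i) d}.ncard) ∧
      (∀ F ∈ dfaces Ω d, Odd {i | F ∈ dfaces (Ωi i) d}.ncard) ∧
      (∀ i, (verts (Ωi i)).ncard < (verts Ω).ncard)

/-- `Γ` is `d`-chorded: every face-minimal `d`-dimensional cycle in `Γ` that is not
`d`-complete has a chord set in `Γ`. -/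
def DChorded (Γ : Set (Finset V)) (d : ℕ) : Prop :=
  ∀ Ω, CycleIn Γ Ω d → FaceMinimal Ω d → ¬ DComplete Ω d → ∃ C, ChordSet Γ Ω d C

/-- `Γ` is `d`-cycle-complete: every vertex-minimal `d`-dimensional cycle in `Γ` is
`d`-complete. -/
def DCycleComplete (Γ : Set (Finset V)) (d : ℕ) : Prop :=
  ∀ Ω, CycleIn Γ Ω d → VertexMinimal Γ Ω d → DComplete Ω d

/-- The `d`-closure `Δ_d(K)` of the complex `K`, relative to the vertex set `W`:
it contains the faces of `K`, all subsets of `W` of size at most `d`, and every subset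
`S` of `W` with `|S| > d+1` all of whose `(d+1)`-subsets are faces of `K`. -/
def closure (W : Set V) (K : Set (Finset V)) (d : ℕ) : Set (Finset V) :=
  K ∪ {S | ↑S ⊆ W ∧ S.card ≤ d} ∪
    {S | ↑S ⊆ W ∧ d + 1 < S.card ∧ ∀ T ⊆ S, T.card = d + 1 → T ∈ K}

/-- A `d`-dimensional tree: a pure `d`-dimensional complex with no `d`-dimensional cycles. -/
def IsTree (K : Set (Finset V)) (d : ℕ) : Prop :=
  IsComplex K ∧ IsPureD K d ∧ ∀ Ω, ¬ CycleIn K Ω d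

/-- The unsigned boundary map on chains (appropriate over rings of characteristic 2):
a face is sent to the sum of the faces obtained by deleting one vertex. -/
noncomputable def ubd {R : Type*} [AddCommMonoid R] (c : Finset V →₀ R) : Finset V →₀ R :=
  c.sum fun F a => F.sum fun v => Finsupp.single (F.erase v) a

/-- The signed (oriented) boundary map on chains, the vertices of each face being listed
in increasing order. -/
noncomputable def sbd [LinearOrder V] {R : Type*} [Ring R] (c : Finset V →₀ R) : Finset V →₀ R :=
  c.sum fun F a =>
    F.sum fun v => Finsupp.single (F.erase v) ((-1 : R) ^ (F.filter fun w => w < v).card * a)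

/-- `c` is an `i`-chain on the complex `K`: it is supported on `i`-faces of `K`. -/
def ChainOn {R : Type*} [Zero R] (K : Set (Finset V)) (i : ℕ) (c : Finset V →₀ R) : Prop :=
  ∀ F ∈ c.support, F ∈ K ∧ F.card = i + 1

/-- Vanishing of the reduced simplicial homology `H̃_i(K; R)` for the unsigned boundary
map (this is reduced simplicial homology when `R` has characteristic 2): every `i`-chain
with vanishing boundary (for `i = 0`, the boundary at the empty face is the augmentation ε)
is the boundary of an `(i+1)`-chain. -/
def RedHomZeroU (K : Set (Finset V)) (R : Type*) [AddCommMonoid R] (i : ℕ) : Prop :=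
  ∀ c : Finset V →₀ R, ChainOn K i c → ubd c = 0 →
    ∃ b : Finset V →₀ R, ChainOn K (i + 1) b ∧ ubd b = c

/-- Vanishing of the reduced simplicial homology `H̃_i(K; R)` (oriented chains). -/
def RedHomZeroS [LinearOrder V] (K : Set (Finset V)) (R : Type*) [Ring R] (i : ℕ) : Prop :=
  ∀ c : Finset V →₀ R, ChainOn K i c → sbd c = 0 →
    ∃ b : Finset V →₀ R, ChainOn K (i + 1) b ∧ sbd b = c

/-- Orientability of a `d`-dimensional cycle: there is a choice of signs on its `d`-faces
making the resulting ℤ-chain have zero (oriented) boundary. -/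
def Orientable [LinearOrder V] (Ω : Set (Finset V)) (d : ℕ) : Prop :=
  ∃ c : Finset V →₀ ℤ, ↑c.support = dfaces Ω d ∧
    (∀ F ∈ c.support, c F = 1 ∨ c F = -1) ∧ sbd c = 0

/-- Orientable-vertex-minimality of a cycle `Ω` in `Γ`: no orientable `d`-dimensional
cycle in `Γ` lies on a strict subset of the vertices of `Ω`. -/
def OrientVertexMinimal [LinearOrder V] (Γ Ω : Set (Finset V)) (d : ℕ) : Prop :=
  ∀ Ω', CycleIn Γ Ω' d → Orientable Ω' d → ¬ (verts Ω' ⊂ verts Ω)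

/-- `Γ` is orientably-`d`-cycle-complete: every orientably-vertex-minimal (orientable)
`d`-dimensional cycle in `Γ` is `d`-complete. -/
def OrientDCycleComplete [LinearOrder V] (Γ : Set (Finset V)) (d : ℕ) : Prop :=
  ∀ Ω, CycleIn Γ Ω d → Orientable Ω d → OrientVertexMinimal Γ Ω d → DComplete Ω d

/-- A minimal non-face of `K`: a subset of the vertex set that is not a face, all of whose
proper subsets are faces. -/
def MinNonFace (K : Set (Finset V)) (S : Finset V) : Prop :=
  ↑S ⊆ verts K ∧ S ∉ K ∧ ∀ T ⊂ S, T ∈ K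

section Helpers
set_option linter.unusedSectionVars false


lemma ubd_apply_sum {R : Type*} [AddCommMonoid R] (c : Finset V →₀ R)
    (s : Finset (Finset V)) (hs : c.support ⊆ s) (g : Finset V) :
    ubd c g = ∑ F ∈ s, ∑ v ∈ F, if F.erase v = g then c F else 0 := by
  classical
  rw [ubd, Finsupp.sum]
  rw [Finset.sum_subset hs (fun F _ hF => by
    simp [Finsupp.notMem_support_iff.mp hF])]
  rw [Finsupp.finset_sum_apply]
  refine Finset.sum_congr rfl fun F _ => ?_
  rw [Finsupp.finset_sum_apply]
  refine Finset.sum_congr rfl fun v _ => ?_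
  rw [Finsupp.single_apply]

lemma ubd_zero {R : Type*} [AddCommMonoid R] : ubd (0 : Finset V →₀ R) = 0 := by
  simp [ubd]

lemma ubd_apply_of_card_ne {R : Type*} [AddCommMonoid R] (c : Finset V →₀ R) {i : ℕ}
    (hc : ∀ F ∈ c.support, F.card = i + 1) (g : Finset V) (hg : g.card ≠ i) :
    ubd c g = 0 := by
  classical
  rw [ubd_apply_sum c c.support Finset.Subset.rfl]
  refine Finset.sum_eq_zero fun F hF => Finset.sum_eq_zero fun v hv => ?_
  rw [if_neg]
  intro h
  apply hg
  rw [← h, Finset.card_erase_of_mem hv, hc F hF]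
  omega

lemma inner_boundary_sum {R : Type*} [AddCommMonoid R] {i : ℕ} (a : R)
    {F g : Finset V} (hF : F.card = i + 1) (hg : g.card = i) :
    (∑ v ∈ F, if F.erase v = g then a else 0) = if g ⊆ F then a else 0 := by
  classical
  by_cases hsub : g ⊆ F
  · rw [if_pos hsub]
    have hcard : (F \ g).card = 1 := by
      rw [Finset.card_sdiff_of_subset hsub, hF, hg]
      omega
    obtain ⟨v₀, hv₀⟩ := Finset.card_eq_one.mp hcard
    have hv₀F : v₀ ∈ F := (Finset.mem_sdiff.mp (hv₀ ▸ Finset.mem_singleton_self v₀)).1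
    have hv₀g : v₀ ∉ g := (Finset.mem_sdiff.mp (hv₀ ▸ Finset.mem_singleton_self v₀)).2
    have herase : F.erase v₀ = g := by
      apply Finset.eq_of_subset_of_card_le
      · intro x hx
        have hxF := Finset.mem_erase.mp hx
        by_contra hxg
        have : x ∈ F \ g := Finset.mem_sdiff.mpr ⟨hxF.2, hxg⟩
        rw [hv₀] at this
        exact hxF.1 (Finset.mem_singleton.mp this)
      · rw [Finset.card_erase_of_mem hv₀F, hF, hg]
        omega
    rw [Finset.sum_eq_single v₀]
    · rw [if_pos herase]
    · intro v hv hne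
      rw [if_neg]
      intro h
      by_cases hvg : v ∈ g
      · have : v ∈ F.erase v := h ▸ hvg
        exact (Finset.notMem_erase v F) this
      · have : v ∈ F \ g := Finset.mem_sdiff.mpr ⟨hv, hvg⟩
        rw [hv₀] at this
        exact hne (Finset.mem_singleton.mp this)
    · intro h; exact absurd hv₀F h
  · rw [if_neg hsub]
    refine Finset.sum_eq_zero fun v hv => ?_
    rw [if_neg]
    intro h
    exact hsub (h ▸ Finset.erase_subset v F)

lemma ubd_apply_of_card {R : Type*} [AddCommMonoid R] (c : Finset V →₀ R) {i : ℕ}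
    (hc : ∀ F ∈ c.support, F.card = i + 1) (g : Finset V) (hg : g.card = i) :
    ubd c g = ∑ F ∈ c.support.filter (fun F => g ⊆ F), c F := by
  classical
  rw [ubd_apply_sum c c.support Finset.Subset.rfl, Finset.sum_filter]
  refine Finset.sum_congr rfl fun F hF => ?_
  exact inner_boundary_sum (c F) (hc F hF) hg

lemma ubd_mapRange {R S : Type*} [AddCommMonoid R] [AddCommMonoid S] (φ : R →+ S)
    (c : Finset V →₀ R) :
    ubd (Finsupp.mapRange φ φ.map_zero c) = Finsupp.mapRange φ φ.map_zero (ubd c) := by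
  classical
  ext g
  rw [Finsupp.mapRange_apply,
    ubd_apply_sum (Finsupp.mapRange φ φ.map_zero c) c.support Finsupp.support_mapRange,
    ubd_apply_sum c c.support Finset.Subset.rfl, map_sum]
  refine Finset.sum_congr rfl fun F _ => ?_
  rw [map_sum]
  refine Finset.sum_congr rfl fun v _ => ?_
  rw [apply_ite φ, φ.map_zero, Finsupp.mapRange_apply]

lemma ite_add_ite' {R : Type*} [AddCommMonoid R] (P : Prop) [Decidable P] (x y : R) :
    (if P then (x + y) else 0) = (if P then x else 0) + (if P then y else 0) := by
  split <;> simp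

lemma ubd_add {R : Type*} [AddCommMonoid R] (a b : Finset V →₀ R) :
    ubd (a + b) = ubd a + ubd b := by
  classical
  ext g
  rw [Finsupp.add_apply,
    ubd_apply_sum (a + b) (a.support ∪ b.support)
      (Finsupp.support_add),
    ubd_apply_sum a (a.support ∪ b.support) Finset.subset_union_left,
    ubd_apply_sum b (a.support ∪ b.support) Finset.subset_union_right,
    ← Finset.sum_add_distrib]
  refine Finset.sum_congr rfl fun F _ => ?_
  rw [← Finset.sum_add_distrib]
  refine Finset.sum_congr rfl fun v _ => ?_
  rw [Finsupp.add_apply, ite_add_ite']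

lemma ubd_sub {R : Type*} [AddCommGroup R] (a b : Finset V →₀ R) :
    ubd (a - b) = ubd a - ubd b := by
  have h := ubd_add (a - b) b
  rw [sub_add_cancel] at h
  rw [h]; abel

lemma ubd_smul {R : Type*} [Semiring R] (r : R) (a : Finset V →₀ R) :
    ubd (r • a) = r • ubd a := by
  classical
  ext g
  rw [Finsupp.smul_apply,
    ubd_apply_sum (r • a) a.support Finsupp.support_smul,
    ubd_apply_sum a a.support Finset.Subset.rfl, Finset.smul_sum]
  refine Finset.sum_congr rfl fun F _ => ?_
  rw [Finset.smul_sum]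
  refine Finset.sum_congr rfl fun v _ => ?_
  rw [Finsupp.smul_apply, smul_ite, smul_zero]

lemma ubd_finset_sum {R : Type*} [AddCommMonoid R] {ι : Type*} (s : Finset ι)
    (f : ι → (Finset V →₀ R)) :
    ubd (∑ i ∈ s, f i) = ∑ i ∈ s, ubd (f i) := by
  classical
  induction s using Finset.induction_on with
  | empty => simp [ubd_zero]
  | insert _ _ hni ih => rw [Finset.sum_insert hni, Finset.sum_insert hni, ubd_add, ih]


section CycleLemmas

variable {k : Type*} [Field k] [CharP k 2]

lemma even_cast_eq_zero {n : ℕ} (h : Even n) : (n : k) = 0 := by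
  obtain ⟨m, hm⟩ := h
  have h2 : ((2 : ℕ) : k) = 0 := by
    exact_mod_cast CharP.cast_eq_zero k 2
  rw [hm]
  push_cast
  rw [show ((m:k) + (m:k)) = ((2:ℕ):k) * m by push_cast; ring, h2, zero_mul]

/-- the boundary of the indicator chain of a cycle vanishes -/
lemma cycle_ind_ubd_zero {Ω : Set (Finset V)} {d : ℕ} (hΩ : IsCycle Ω d)
    (c : Finset V →₀ k) (hsupp : ↑c.support = dfaces Ω d) (h1 : ∀ F ∈ c.support, c F = 1) :
    ubd c = 0 := by
  classical
  have hc : ∀ F ∈ c.support, F.card = d + 1 := by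
    intro F hF
    have : F ∈ dfaces Ω d := by rw [← hsupp] at *; exact_mod_cast hF
    exact this.2
  ext g
  rw [Finsupp.coe_zero, Pi.zero_apply]
  by_cases hg : g.card = d
  · rw [ubd_apply_of_card c hc g hg]
    by_cases hne : (c.support.filter (fun F => g ⊆ F)).Nonempty
    · obtain ⟨F, hF⟩ := hne
      have hFs := (Finset.mem_filter.mp hF).1
      have hgF := (Finset.mem_filter.mp hF).2
      have hFd : F ∈ dfaces Ω d := by rw [← hsupp]; exact_mod_cast hFs
      have hgΩ : g ∈ Ω := hΩ.1 F hFd.1 g hgF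
      have heven := hΩ.2.2.2.2 g hgΩ hg
      have hset : {F | F ∈ dfaces Ω d ∧ g ⊆ F} = ↑(c.support.filter (fun F => g ⊆ F)) := by
        ext X
        simp only [Set.mem_setOf_eq, Finset.coe_filter, ← hsupp, Finset.mem_coe,
          Finset.mem_filter]
      rw [hset, Set.ncard_coe_finset] at heven
      calc ∑ F ∈ c.support.filter (fun F => g ⊆ F), c F
          = ∑ F ∈ c.support.filter (fun F => g ⊆ F), 1 := by
            refine Finset.sum_congr rfl fun X hX => ?_
            exact h1 X (Finset.mem_filter.mp hX).1
        _ = ((c.support.filter (fun F => g ⊆ F)).card : k) := by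
            rw [Finset.sum_const, nsmul_eq_mul, mul_one]
        _ = 0 := even_cast_eq_zero heven
    · rw [Finset.not_nonempty_iff_eq_empty.mp hne, Finset.sum_empty]
  · exact ubd_apply_of_card_ne c hc g hg

lemma adj_symm (S : Set (Finset V)) (d : ℕ) : Symmetric (adj S d) := by
  intro F G h
  exact ⟨h.2.1, h.1, by rw [Finset.inter_comm]; exact h.2.2⟩

lemma adjacent_of_common {d : ℕ} {F G f : Finset V} (hF : F.card = d + 1)
    (hG : G.card = d + 1) (hf : f.card = d) (hfF : f ⊆ F) (hfG : f ⊆ G) :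
    F = G ∨ (F ∩ G).card = d := by
  have h1 : f ⊆ F ∩ G := Finset.subset_inter hfF hfG
  have h2 : d ≤ (F ∩ G).card := hf ▸ Finset.card_le_card h1
  have h3 : (F ∩ G).card ≤ d + 1 := hF ▸ Finset.card_le_card Finset.inter_subset_left
  by_cases hcard : (F ∩ G).card = d + 1
  · left
    have hFG : F ∩ G = F :=
      Finset.eq_of_subset_of_card_le Finset.inter_subset_left (by omega)
    have hFG' : F ∩ G = G :=
      Finset.eq_of_subset_of_card_le Finset.inter_subset_right (by omega)
    rw [← hFG, hFG']
  · right; omega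

lemma gen_dfaces (S : Set (Finset V)) (d : ℕ) (hS : ∀ F ∈ S, F.card = d + 1) :
    dfaces (gen S) d = S := by
  ext F
  constructor
  · rintro ⟨⟨G, hG, hFG⟩, hcard⟩
    have : F = G := Finset.eq_of_subset_of_card_le hFG (by rw [hS G hG, hcard])
    rwa [this]
  · intro hF
    exact ⟨⟨F, hF, Finset.Subset.rfl⟩, hS F hF⟩

lemma reach_in (s : Set (Finset V)) (d : ℕ) (F₀ : Finset V)
    {G : Finset V} (h : Relation.ReflTransGen (adj s d) F₀ G) :
    Relation.ReflTransGen (adj {X ∈ s | Relation.ReflTransGen (adj s d) F₀ X} d) F₀ G := by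
  induction h with
  | refl => exact .refl
  | tail hb hstep ih =>
    exact ih.tail ⟨⟨hstep.1, hb⟩, ⟨hstep.2.1, hb.tail hstep⟩, hstep.2.2⟩


lemma zero_one_chain_boundary (Γ : Set (Finset V)) (hcomplex : IsComplex Γ) (d : ℕ)
    (H : ∀ Ω, CycleIn Γ Ω d → ∃ c : Finset V →₀ k, ↑c.support = dfaces Ω d ∧
      (∀ F ∈ c.support, c F = 1) ∧ ∃ b, ChainOn Γ (d + 1) b ∧ ubd b = c) :
    ∀ z : Finset V →₀ k, ChainOn Γ d z → (∀ F ∈ z.support, z F = 1) → ubd z = 0 →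
      ∃ b, ChainOn Γ (d + 1) b ∧ ubd b = z := by
  classical
  suffices h : ∀ n (z : Finset V →₀ k), z.support.card = n → ChainOn Γ d z →
      (∀ F ∈ z.support, z F = 1) → ubd z = 0 →
      ∃ b, ChainOn Γ (d + 1) b ∧ ubd b = z by
    intro z; exact h _ z rfl
  intro n
  induction n using Nat.strong_induction_on with
  | _ n ih =>
  intro z hcard hz h1 h0
  rcases Finset.eq_empty_or_nonempty z.support with he | ⟨F₀, hF₀⟩
  · refine ⟨0, fun F hF => by simp at hF, ?_⟩
    rw [ubd_zero, Finsupp.support_eq_empty.mp he]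
  · set s := z.support with hs
    have hzcards : ∀ F ∈ s, F.card = d + 1 := fun F hF => (hz F hF).2
    set P : Finset V → Prop :=
      fun G => Relation.ReflTransGen (adj (↑s : Set (Finset V)) d) F₀ G with hP
    set S : Finset (Finset V) := s.filter P with hSdef
    have hF₀S : F₀ ∈ S := Finset.mem_filter.mpr ⟨hF₀, Relation.ReflTransGen.refl⟩
    have hSsub : S ⊆ s := Finset.filter_subset _ _
    have hScards : ∀ F ∈ (↑S : Set (Finset V)), F.card = d + 1 :=
      fun F hF => hzcards F (hSsub (Finset.mem_coe.mp hF))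
    have hclosed : ∀ G ∈ S, ∀ G', adj (↑s : Set (Finset V)) d G G' → G' ∈ S := by
      intro G hG G' hadj
      exact Finset.mem_filter.mpr ⟨Finset.mem_coe.mp hadj.2.1,
        ((Finset.mem_filter.mp hG).2).tail hadj⟩
    have hface : ∀ f : Finset V, f.card = d → ∀ G ∈ S, f ⊆ G →
        ∀ F ∈ s, f ⊆ F → F ∈ S := by
      intro f hf G hG hfG F hF hfF
      rcases adjacent_of_common (hzcards F hF) (hzcards G (hSsub hG)) hf hfF hfG with
        heq | hinter
      · rwa [heq]
      · refine hclosed G hG F ⟨Finset.mem_coe.mpr (hSsub hG), Finset.mem_coe.mpr hF, ?_⟩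
        rw [Finset.inter_comm]; exact hinter
    set Ω : Set (Finset V) := gen (↑S : Set (Finset V)) with hΩdef
    have hdf : dfaces Ω d = ↑S := gen_dfaces _ d hScards
    have hcoe : {X ∈ (↑s : Set (Finset V)) | P X} = (↑S : Set (Finset V)) := by
      rw [hSdef]; ext X; simp [P]
    have hcyc : CycleIn Γ Ω d := by
      refine ⟨?_, ?_, ?_, ?_, ?_, ?_⟩
      · rintro G ⟨F, hF, hGF⟩
        exact hcomplex F (hz F (hSsub (Finset.mem_coe.mp hF))).1 G hGF
      · rintro F ⟨F', hF', hFF'⟩ G hGF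
        exact ⟨F', hF', hGF.trans hFF'⟩
      · rintro F ⟨F', hF', hFF'⟩
        exact ⟨F', by rw [hdf]; exact hF', hFF'⟩
      · exact ⟨F₀, by rw [hdf]; exact Finset.mem_coe.mpr hF₀S⟩
      · intro F hF G hG
        rw [hdf] at hF hG ⊢
        have hPF : P F := (Finset.mem_filter.mp (Finset.mem_coe.mp hF)).2
        have hPG : P G := (Finset.mem_filter.mp (Finset.mem_coe.mp hG)).2
        have hrF := reach_in (↑s : Set (Finset V)) d F₀ hPF
        have hrG := reach_in (↑s : Set (Finset V)) d F₀ hPG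
        rw [hcoe] at hrF hrG
        haveI : Std.Symm (adj (↑S : Set (Finset V)) d) :=
          ⟨fun a b h => adj_symm (↑S : Set (Finset V)) d h⟩
        have hsym := fun {a b : Finset V}
          (h : Relation.ReflTransGen (adj (↑S : Set (Finset V)) d) a b) => Std.Symm.symm a b h
        exact (hsym hrF).trans hrG
      · intro f hfΩ hfcard
        obtain ⟨G, hGS, hfG⟩ := hfΩ
        have hset : {F | F ∈ dfaces Ω d ∧ f ⊆ F} =
            ↑(s.filter (fun F => f ⊆ F)) := by
          ext X
          simp only [Set.mem_setOf_eq, Finset.coe_filter, Set.mem_setOf_eq, hdf,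
            Finset.mem_coe, Finset.mem_filter]
          constructor
          · rintro ⟨hXS, hfX⟩
            exact ⟨hSsub hXS, hfX⟩
          · rintro ⟨hXs, hfX⟩
            exact ⟨hface f hfcard G (Finset.mem_coe.mp hGS) hfG X hXs hfX, hfX⟩
        rw [hset, Set.ncard_coe_finset]
        have h0f := DFunLike.congr_fun h0 f
        rw [ubd_apply_of_card z hzcards f hfcard, Finsupp.coe_zero, Pi.zero_apply] at h0f
        have hsum : ∑ F ∈ s.filter (fun F => f ⊆ F), z F
            = (((s.filter (fun F => f ⊆ F)).card : ℕ) : k) := by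
          rw [Finset.sum_congr rfl (fun X hX => h1 X (Finset.mem_filter.mp hX).1),
            Finset.sum_const, nsmul_eq_mul, mul_one]
        rw [hsum] at h0f
        have := (CharP.cast_eq_zero_iff k 2 _).mp h0f
        obtain ⟨m, hm⟩ := this
        exact ⟨m, by omega⟩
    obtain ⟨c', hc'sup, hc'1, b₁, hb₁chain, hb₁⟩ := H Ω hcyc
    have hc'S : c'.support = S := by
      apply Finset.coe_injective
      rw [hc'sup, hdf]
    set z' : Finset V →₀ k := z - c' with hz'def
    have hz'supp : z'.support = s \ S := by
      ext F
      rw [Finsupp.mem_support_iff, Finset.mem_sdiff]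
      rw [hz'def, Finsupp.sub_apply]
      by_cases hFS : F ∈ S
      · have hzF : z F = 1 := h1 F (hSsub hFS)
        have hcF : c' F = 1 := hc'1 F (by rw [hc'S]; exact hFS)
        simp [hzF, hcF, hFS]
      · have hcF : c' F = 0 := Finsupp.notMem_support_iff.mp (by rw [hc'S]; exact hFS)
        rw [hcF, sub_zero]
        constructor
        · intro hFz
          exact ⟨Finsupp.mem_support_iff.mpr hFz, hFS⟩
        · rintro ⟨hFs, -⟩
          exact Finsupp.mem_support_iff.mp hFs
    have hlt : (s \ S).card < n := by
      rw [← hcard]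
      have h1' : (s \ S).card ≤ s.card - S.card := by
        rw [Finset.card_sdiff_of_subset hSsub]
      have h2' : 0 < S.card := Finset.card_pos.mpr ⟨F₀, hF₀S⟩
      have h3' : S.card ≤ s.card := Finset.card_le_card hSsub
      omega
    have hubdc' : ubd c' = 0 := cycle_ind_ubd_zero hcyc.2 c' hc'sup hc'1
    have hz'chain : ChainOn Γ d z' := by
      intro F hF
      rw [hz'supp] at hF
      exact hz F (Finset.mem_sdiff.mp hF).1
    have hz'1 : ∀ F ∈ z'.support, z' F = 1 := by
      intro F hF
      rw [hz'supp, Finset.mem_sdiff] at hF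
      have hcF : c' F = 0 := Finsupp.notMem_support_iff.mp (by rw [hc'S]; exact hF.2)
      rw [hz'def, Finsupp.sub_apply, hcF, sub_zero]
      exact h1 F hF.1
    have hz'0 : ubd z' = 0 := by
      rw [hz'def, ubd_sub, h0, hubdc', sub_zero]
    obtain ⟨b₂, hb₂chain, hb₂⟩ :=
      ih (s \ S).card hlt z' (by rw [hz'supp]) hz'chain hz'1 hz'0
    refine ⟨b₁ + b₂, ?_, ?_⟩
    · intro F hF
      have := Finsupp.support_add hF
      rcases Finset.mem_union.mp this with h | h
      · exact hb₁chain F h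
      · exact hb₂chain F h
    · rw [ubd_add, hb₁, hb₂, hz'def]
      abel

end CycleLemmas


end Helpers

/-- Theorem 5.3: over a field `k` of characteristic 2,
`H̃_d(Γ; k) ≠ 0` if and only if `Γ` contains a `d`-dimensional cycle the sum of whose
`d`-faces is not a `d`-boundary in `Γ`. -/
theorem homology_nonzero_iff_cycle {V : Type*} [DecidableEq V] [Fintype V]
    (Γ : Set (Finset V)) (hcomplex : IsComplex Γ) (d : ℕ)
    (k : Type*) [Field k] [CharP k 2] :
    ¬ RedHomZeroU Γ k d ↔
      ∃ Ω, CycleIn Γ Ω d ∧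
        ∀ c : Finset V →₀ k, ↑c.support = dfaces Ω d → (∀ F ∈ c.support, c F = 1) →
          ¬ ∃ b : Finset V →₀ k, ChainOn Γ (d + 1) b ∧ ubd b = c := by
  classical
  constructor
  · intro hnr
    by_contra hno
    apply hnr
    push_neg at hno
    have H : ∀ Ω, CycleIn Γ Ω d → ∃ c : Finset V →₀ k, ↑c.support = dfaces Ω d ∧
        (∀ F ∈ c.support, c F = 1) ∧ ∃ b, ChainOn Γ (d + 1) b ∧ ubd b = c := by
      intro Ω hΩ
      obtain ⟨c, hc1, hc2, hc3⟩ := hno Ω hΩ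
      exact ⟨c, hc1, hc2, hc3⟩
    intro c hc h0
    letI : Algebra (ZMod 2) k := ZMod.algebra k 2
    set B := Module.Basis.ofVectorSpace (ZMod 2) k with hB
    set J : Finset (Module.Basis.ofVectorSpaceIndex (ZMod 2) k) :=
      c.support.biUnion fun F => (B.repr (c F)).support with hJ
    have zmodcases : ∀ r : ZMod 2, r = 0 ∨ r = 1 := by decide
    set φ : Module.Basis.ofVectorSpaceIndex (ZMod 2) k → (k →+ k) := fun j =>
      { toFun := fun x => algebraMap (ZMod 2) k (B.repr x j)
        map_zero' := by simp
        map_add' := fun x y => by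
          show algebraMap (ZMod 2) k (B.repr (x + y) j) = _
          rw [map_add, Finsupp.add_apply, map_add] } with hφ
    set z : Module.Basis.ofVectorSpaceIndex (ZMod 2) k → (Finset V →₀ k) := fun j =>
      Finsupp.mapRange (φ j) ((φ j).map_zero) c with hzdef
    have hz0 : ∀ j, ubd (z j) = 0 := by
      intro j
      rw [hzdef]
      rw [ubd_mapRange (φ j) c, h0]
      ext g
      simp
    have hzsupp : ∀ j, (z j).support ⊆ c.support := fun j => Finsupp.support_mapRange
    have hzchain : ∀ j, ChainOn Γ d (z j) := fun j F hF => hc F (hzsupp j hF)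
    have hz1 : ∀ j, ∀ F ∈ (z j).support, z j F = 1 := by
      intro j F hF
      have hne := Finsupp.mem_support_iff.mp hF
      rcases zmodcases (B.repr (c F) j) with h | h
      · exfalso
        apply hne
        show algebraMap (ZMod 2) k (B.repr (c F) j) = 0
        rw [h, map_zero]
      · show algebraMap (ZMod 2) k (B.repr (c F) j) = 1
        rw [h, map_one]
    choose b hbchain hbz using fun j => zero_one_chain_boundary Γ hcomplex d H (z j)
      (hzchain j) (hz1 j) (hz0 j)
    have hrec : c = ∑ j ∈ J, B j • z j := by
      ext F
      rw [Finsupp.finset_sum_apply]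
      have hsub : (B.repr (c F)).support ⊆ J := by
        by_cases hF : F ∈ c.support
        · exact fun j hj => Finset.mem_biUnion.mpr ⟨F, hF, hj⟩
        · intro j hj
          rw [Finsupp.notMem_support_iff.mp hF] at hj
          simp at hj
      have hterm : ∀ j, (B j • z j) F = (B.repr (c F) j) • B j := by
        intro j
        rw [Finsupp.smul_apply, smul_eq_mul]
        show B j * algebraMap (ZMod 2) k (B.repr (c F) j) = _
        rw [Algebra.smul_def, mul_comm]
      calc c F = Finsupp.linearCombination (ZMod 2) (⇑B) (B.repr (c F)) :=
            (B.linearCombination_repr (c F)).symm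
        _ = ∑ j ∈ (B.repr (c F)).support, (B.repr (c F) j) • B j := by
            rw [Finsupp.linearCombination_apply, Finsupp.sum]
        _ = ∑ j ∈ J, (B.repr (c F) j) • B j := by
            refine Finset.sum_subset hsub fun j _ hj => ?_
            rw [Finsupp.notMem_support_iff.mp hj, zero_smul]
        _ = ∑ j ∈ J, (B j • z j) F := by
            refine Finset.sum_congr rfl fun j _ => (hterm j).symm
    refine ⟨∑ j ∈ J, B j • b j, ?_, ?_⟩
    · intro F hF
      obtain ⟨j, _, hjF⟩ := Finsupp.mem_support_finset_sum F hF
      exact hbchain j F (Finsupp.support_smul hjF)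
    · rw [ubd_finset_sum]
      rw [hrec]
      refine Finset.sum_congr rfl fun j _ => ?_
      rw [ubd_smul, hbz j]
  · rintro ⟨Ω, hcyc, hnb⟩ hred
    set T : Finset (Finset V) := (Set.toFinite (dfaces Ω d)).toFinset with hT
    set c : Finset V →₀ k :=
      ⟨T, fun F => if F ∈ T then 1 else 0, fun F => by by_cases h : F ∈ T <;> simp [h]⟩
      with hcdef
    have hsupp : ↑c.support = dfaces Ω d := by
      show ↑T = dfaces Ω d
      exact Set.Finite.coe_toFinset _
    have h1 : ∀ F ∈ c.support, c F = 1 := by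
      intro F hF
      show (if F ∈ T then (1:k) else 0) = 1
      rw [if_pos hF]
    have hchain : ChainOn Γ d c := by
      intro F hF
      have : F ∈ dfaces Ω d := by rw [← hsupp]; exact Finset.mem_coe.mpr hF
      exact ⟨hcyc.1 this.1, this.2⟩
    have h0 : ubd c = 0 := cycle_ind_ubd_zero hcyc.2 c hsupp h1
    exact hnb c hsupp h1 (hred c hchain h0)


end ChordedPaper
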